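/- For every k ∈ {0,…,M−1} and every j ∈ {0,…,M}: if j ∉ {k, k+1} then P_k v_j = v_j; moreover P_k v_k = (1−b₂)·v_k + b₂·v_{k+1} and P_k v_{k+1} = b₁·v_k + (1−b₁)·v_{k+1}. -/

import Mathlib

open Matrix

/-- The vector `v_j ∈ ℝ^{M+1}`: the law of `min(j, G)` for `G ~ Geo(q)`. -/
noncomputable def sixV (q : ℝ) (M : ℕ) (j : Fin (M + 1)) : Fin (M + 1) → ℝ :=
  fun k =>
    if (k : ℕ) < (j : ℕ) then (1 - q) * q ^ (k : ℕ)
    else if (k : ℕ) = (j : ℕ) then q ^ (j : ℕ)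
    else 0

/-- The update matrix `P_k`, equal to the identity except in rows/columns `k, k+1`. -/
noncomputable def sixP (b₁ b₂ : ℝ) (M : ℕ) (k : Fin M) :
    Matrix (Fin (M + 1)) (Fin (M + 1)) ℝ :=
  fun i j =>
    if i = k.castSucc ∧ j = k.castSucc then 1 - b₁
    else if i = k.castSucc ∧ j = k.succ then b₂
    else if i = k.succ ∧ j = k.castSucc then b₁
    else if i = k.succ ∧ j = k.succ then 1 - b₂
    else if i = j then 1 else 0

lemma sixP_mulVec (b₁ b₂ : ℝ) {M : ℕ} (k : Fin M) (w : Fin (M + 1) → ℝ)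
    (i : Fin (M + 1)) :
    (sixP b₁ b₂ M k).mulVec w i =
      if i = k.castSucc then (1 - b₁) * w k.castSucc + b₂ * w k.succ
      else if i = k.succ then b₁ * w k.castSucc + (1 - b₂) * w k.succ
      else w i := by
  have hne : k.castSucc ≠ k.succ := (Fin.castSucc_lt_succ : k.castSucc < k.succ).ne
  have hrow : ∀ x, sixP b₁ b₂ M k i x * w x =
      (if x = k.castSucc then sixP b₁ b₂ M k i k.castSucc * w k.castSucc else 0)
      + (if x = k.succ then sixP b₁ b₂ M k i k.succ * w k.succ else 0)
      + (if x = i then (if i = k.castSucc ∨ i = k.succ then 0 else w i) else 0) := by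
    intro x
    by_cases h1 : x = k.castSucc
    · subst h1
      by_cases h2 : k.castSucc = i
      · simp [← h2, hne, hne.symm]
      · simp [hne, hne.symm, h2, Ne.symm h2]
    · by_cases h2 : x = k.succ
      · subst h2
        by_cases h3 : k.succ = i
        · simp [← h3, hne, hne.symm]
        · simp [hne, hne.symm, h3, Ne.symm h3]
      · by_cases h3 : x = i
        · subst h3
          simp [sixP, h1, h2, Ne.symm h1, Ne.symm h2]
        · simp [sixP, h1, h2, h3, Ne.symm h3]
  rw [Matrix.mulVec, dotProduct, Finset.sum_congr rfl fun x _ => hrow x]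
  simp only [Finset.sum_add_distrib, Finset.sum_ite_eq', Finset.mem_univ, if_true]
  by_cases h1 : i = k.castSucc
  · subst h1
    simp [sixP, hne, hne.symm]
  · by_cases h2 : i = k.succ
    · subst h2
      simp [sixP, hne, hne.symm, h1]
    · simp [sixP, h1, h2]

theorem stmt0 (b₁ b₂ q : ℝ) (hb₁ : 0 < b₁) (hb₁₂ : b₁ < b₂) (hb₂ : b₂ < 1)
    (hq : q = b₁ / b₂) (M : ℕ) (hM : 1 ≤ M) (k : Fin M) :
    (∀ j : Fin (M + 1), j ≠ k.castSucc → j ≠ k.succ →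
      (sixP b₁ b₂ M k).mulVec (sixV q M j) = sixV q M j) ∧
    (sixP b₁ b₂ M k).mulVec (sixV q M k.castSucc) =
      (1 - b₂) • sixV q M k.castSucc + b₂ • sixV q M k.succ ∧
    (sixP b₁ b₂ M k).mulVec (sixV q M k.succ) =
      b₁ • sixV q M k.castSucc + (1 - b₁) • sixV q M k.succ := by
  have hb₂0 : b₂ ≠ 0 := (hb₁.trans hb₁₂).ne'
  have hne : k.castSucc ≠ k.succ := (Fin.castSucc_lt_succ : k.castSucc < k.succ).ne
  have hb1 : b₁ = b₂ * q := by rw [hq]; field_simp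
  subst hb1
  refine ⟨fun j hj1 hj2 => ?_, ?_, ?_⟩
  · have hj1' : (j : ℕ) ≠ (k : ℕ) := by simpa [Fin.ext_iff] using hj1
    have hj2' : (j : ℕ) ≠ (k : ℕ) + 1 := by simpa [Fin.ext_iff] using hj2
    funext i
    rw [sixP_mulVec]
    by_cases h1 : i = k.castSucc
    · subst h1
      simp only [if_pos rfl, sixV, Fin.coe_castSucc, Fin.val_succ]
      split_ifs <;> first | ring1 | omega
    · by_cases h2 : i = k.succ
      · subst h2
        rw [if_neg h1, if_pos rfl]
        simp only [sixV, Fin.coe_castSucc, Fin.val_succ]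
        split_ifs <;> first | ring1 | omega
      · rw [if_neg h1, if_neg h2]
  · funext i
    rw [sixP_mulVec]
    by_cases h1 : i = k.castSucc
    · subst h1
      simp only [if_pos rfl, Pi.add_apply, Pi.smul_apply, smul_eq_mul, sixV,
        Fin.coe_castSucc, Fin.val_succ]
      split_ifs <;> first | ring1 | omega
    · by_cases h2 : i = k.succ
      · subst h2
        rw [if_neg h1, if_pos rfl]
        simp only [Pi.add_apply, Pi.smul_apply, smul_eq_mul, sixV,
          Fin.coe_castSucc, Fin.val_succ]
        split_ifs <;> first | ring1 | omega
      · rw [if_neg h1, if_neg h2]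
        have hi1 : (i : ℕ) ≠ (k : ℕ) := by simpa [Fin.ext_iff] using h1
        have hi2 : (i : ℕ) ≠ (k : ℕ) + 1 := by simpa [Fin.ext_iff] using h2
        simp only [Pi.add_apply, Pi.smul_apply, smul_eq_mul, sixV,
          Fin.coe_castSucc, Fin.val_succ]
        split_ifs <;> first | ring1 | omega
  · funext i
    rw [sixP_mulVec]
    by_cases h1 : i = k.castSucc
    · subst h1
      simp only [if_pos rfl, Pi.add_apply, Pi.smul_apply, smul_eq_mul, sixV,
        Fin.coe_castSucc, Fin.val_succ]
      split_ifs <;> first | ring1 | omega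
    · by_cases h2 : i = k.succ
      · subst h2
        rw [if_neg h1, if_pos rfl]
        simp only [Pi.add_apply, Pi.smul_apply, smul_eq_mul, sixV,
          Fin.coe_castSucc, Fin.val_succ]
        split_ifs <;> first | ring1 | omega
      · rw [if_neg h1, if_neg h2]
        have hi1 : (i : ℕ) ≠ (k : ℕ) := by simpa [Fin.ext_iff] using h1
        have hi2 : (i : ℕ) ≠ (k : ℕ) + 1 := by simpa [Fin.ext_iff] using h2
        simp only [Pi.add_apply, Pi.smul_apply, smul_eq_mul, sixV,
          Fin.coe_castSucc, Fin.val_succ]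
        split_ifs <;> first | ring1 | omega
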